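/- Fix an integer ℓ ≥ 2, an ℓ-periodic function r : ℤ → ℕ, an index a ∈ {0,…,ℓ−1}, and an integer p. For a Young diagram μ with the a-coloring, let n_c(μ) be the number of boxes of color c and define w(μ) := ∑_{c=0}^{ℓ−1} n_c(μ) r_c − p · col(μ). Then, in the ring of formal power series in q_0, …, q_{ℓ−1} with coefficients in the Laurent polynomial ring ℤ[y, y^{−1}] (product topology), writing q̃_c := y^{2 r_c} q_c for c ∈ ℤ (ℓ-periodically) and z := q̃_0 ⋯ q̃_{ℓ−1}, the family over all Young diagrams μ of the terms y^{2 w(μ)} ∏_{c=0}^{ℓ−1} q_c^{n_c(μ)} has a sum, and this sum equals ∏_{k=1}^∞ (1 − y^{−2p} z^k)^{−1} ∏_{c=1}^{ℓ−1} (1 − y^{−2p} z^{k−1} q̃_a q̃_{a−1} ⋯ q̃_{a−c+1})^{−1}, where each factor is a unit and the infinite product over k is a tprod in the product topology. -/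

import Mathlib

noncomputable section

/-- The discrete topology on the Laurent polynomial ring `ℤ[y, y⁻¹]`. -/
instance : TopologicalSpace (LaurentPolynomial ℤ) := ⊥

/-- The product (coefficient-wise) topology on a multivariate power series ring, with the
coefficient ring given its topology (here the coefficients are discrete). -/
instance mvPowerSeriesTopology (σ R : Type*) [TopologicalSpace R] :
    TopologicalSpace (MvPowerSeries σ R) :=
  inferInstanceAs (TopologicalSpace ((σ →₀ ℕ) → R))

/-- The number of (nonempty) columns of a Young diagram, i.e. the length of its first row. -/
def YoungDiagram.ncols (μ : YoungDiagram) : ℕ := μ.rowLen 0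

/-- The number of boxes of color `c` in the `a`-coloring of a Young diagram `μ` (the paper's
box `(i,j)`, `i` column and `j` row, 1-indexed, has color `≡ a − j + 1 (mod ℓ)`; for a Mathlib
cell, `j = cell.1 + 1`, so the color of a cell is `≡ a − cell.1 (mod ℓ)`). -/
def ncolor (ℓ : ℕ) (a : ℤ) (c : ℕ) (μ : YoungDiagram) : ℕ :=
  (μ.cells.filter fun cell => (a - (cell.1 : ℤ)) % ℓ = (c : ℤ) % ℓ).card

namespace Stmt1Aux

open Finset MvPowerSeries LaurentPolynomial

instance : DiscreteTopology (LaurentPolynomial ℤ) := ⟨rfl⟩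

instance (σ : Type*) : T2Space (MvPowerSeries σ (LaurentPolynomial ℤ)) :=
  inferInstanceAs (T2Space ((σ →₀ ℕ) → LaurentPolynomial ℤ))

abbrev R : Type := LaurentPolynomial ℤ
abbrev S (ℓ : ℕ) : Type := MvPowerSeries (ZMod ℓ) R

/-- `q̃_c`. -/
def qt (ℓ : ℕ) (r : ℤ → ℕ) (c : ℤ) : S ℓ :=
  MvPowerSeries.C (σ := ZMod ℓ) (R := R) (T (2 * (r c : ℤ))) * MvPowerSeries.X ((c : ZMod ℓ))

/-- `t h = y^{-2p} q̃_a q̃_{a-1} ⋯ q̃_{a-h+1}`. -/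
def t (ℓ : ℕ) (r : ℤ → ℕ) (a : ℤ) (p : ℤ) (h : ℕ) : S ℓ :=
  MvPowerSeries.C (σ := ZMod ℓ) (R := R) (T (-2 * p)) * ∏ b ∈ Finset.range h, qt ℓ r (a - (b : ℤ))

def deg {ℓ : ℕ} (d : ZMod ℓ →₀ ℕ) : ℕ := d.sum fun _ n => n

lemma deg_add {ℓ : ℕ} (d e : ZMod ℓ →₀ ℕ) : deg (d + e) = deg d + deg e :=
  Finsupp.sum_add_index' (fun _ => rfl) (fun _ _ _ => rfl)

lemma deg_single {ℓ : ℕ} (x : ZMod ℓ) (n : ℕ) : deg (Finsupp.single x n) = n :=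
  Finsupp.sum_single_index rfl

@[simp] lemma deg_zero {ℓ : ℕ} : deg (0 : ZMod ℓ →₀ ℕ) = 0 := rfl

lemma deg_sub {ℓ : ℕ} {d e : ZMod ℓ →₀ ℕ} (h : e ≤ d) : deg (d - e) = deg d - deg e := by
  have h1 : d - e + e = d := tsub_add_cancel_of_le h
  have h2 := deg_add (d - e) e
  rw [h1] at h2
  omega

lemma deg_mono {ℓ : ℕ} {d e : ZMod ℓ →₀ ℕ} (h : e ≤ d) : deg e ≤ deg d := by
  have h1 : d - e + e = d := tsub_add_cancel_of_le h
  have := deg_add (d - e) e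
  rw [h1] at this
  omega

def E (ℓ : ℕ) (a : ℤ) (h : ℕ) : ZMod ℓ →₀ ℕ := ∑ b ∈ Finset.range h, Finsupp.single ((a - (b : ℤ) : ℤ) : ZMod ℓ) 1

def g (r : ℤ → ℕ) (a : ℤ) (p : ℤ) (h : ℕ) : ℤ := -2 * p + 2 * ∑ b ∈ Finset.range h, (r (a - (b : ℤ)) : ℤ)

lemma deg_E (ℓ : ℕ) (a : ℤ) (h : ℕ) : deg (E ℓ a h) = h := by
  induction h with
  | zero => simp [E]
  | succ n ih => rw [E, Finset.sum_range_succ, ← E, deg_add, ih, deg_single]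

lemma qt_eq_monomial (ℓ : ℕ) (r : ℤ → ℕ) (c : ℤ) :
    qt ℓ r c = monomial (R := R) (Finsupp.single ((c : ZMod ℓ)) 1) (T (2 * (r c : ℤ))) := by
  rw [qt, X, ← monomial_zero_eq_C_apply, monomial_mul_monomial, zero_add, mul_one]

lemma t_eq_monomial (ℓ : ℕ) (r : ℤ → ℕ) (a : ℤ) (p : ℤ) (h : ℕ) : t ℓ r a p h = monomial (R := R) (E ℓ a h) (T (g r a p h)) := by
  induction h with
  | zero =>
    simp only [t, Finset.range_zero, Finset.prod_empty, mul_one, E, Finset.sum_empty, g,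
      Finset.range_zero, Finset.sum_empty, mul_zero, add_zero, ← monomial_zero_eq_C_apply]
  | succ n ih =>
    rw [t, Finset.prod_range_succ, ← mul_assoc, ← t, ih, qt_eq_monomial,
      monomial_mul_monomial, ← T_add]
    have hE : E ℓ a (n + 1) = E ℓ a n + Finsupp.single ((a - (n : ℤ) : ℤ) : ZMod ℓ) 1 :=
      Finset.sum_range_succ _ n
    have hg : g r a p (n + 1) = g r a p n + 2 * (r (a - (n : ℤ)) : ℤ) := by
      simp only [g, Finset.sum_range_succ]; ring
    rw [hE, hg]

end Stmt1Aux

namespace Stmt1Aux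
open Finset MvPowerSeries LaurentPolynomial

section Periodic
variable {ℓ : ℕ} {r : ℤ → ℕ}

lemma r_shift (hr : ∀ b : ℤ, r (b + ℓ) = r b) (k : ℤ) (b : ℤ) : r (b + ℓ * k) = r b := by
  induction k using Int.induction_on with
  | zero => simp
  | succ n ih =>
    have h1 : b + ℓ * ((n : ℤ) + 1) = (b + ℓ * n) + ℓ := by ring
    rw [h1, hr, ih]
  | pred n ih =>
    have h1 : b + ℓ * (-(n : ℤ)) = (b + ℓ * (-(n : ℤ) - 1)) + ℓ := by ring
    rw [h1, hr] at ih
    exact ih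

lemma rfac (hr : ∀ b : ℤ, r (b + ℓ) = r b) {x y : ℤ} (h : (x : ZMod ℓ) = (y : ZMod ℓ)) :
    r x = r y := by
  rw [ZMod.intCast_eq_intCast_iff] at h
  obtain ⟨k, hk⟩ := h.dvd
  have : y = x + ℓ * k := by omega
  rw [this, r_shift hr]

lemma qt_per (hr : ∀ b : ℤ, r (b + ℓ) = r b) {x y : ℤ} (h : (x : ZMod ℓ) = (y : ZMod ℓ)) :
    qt ℓ r x = qt ℓ r y := by
  rw [qt_eq_monomial, qt_eq_monomial, h, rfac hr h]

lemma prod_range_zmod {M : Type*} [CommMonoid M] [NeZero ℓ] (G : ZMod ℓ → M) :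
    ∏ b ∈ Finset.range ℓ, G (b : ZMod ℓ) = ∏ x : ZMod ℓ, G x := by
  refine Finset.prod_bij' (fun b _ => (b : ZMod ℓ)) (fun x _ => x.val) (fun _ _ => mem_univ _)
    (fun x _ => mem_range.2 x.val_lt) ?_ ?_ ?_
  · intro b hb; exact ZMod.val_natCast_of_lt (mem_range.1 hb)
  · intro x _; exact ZMod.natCast_rightInverse x
  · intro b _; rfl

lemma prod_range_zmod_sub {M : Type*} [CommMonoid M] [NeZero ℓ] (G : ZMod ℓ → M)
    (u : ZMod ℓ) :
    ∏ b ∈ Finset.range ℓ, G (u - (b : ZMod ℓ)) = ∏ x : ZMod ℓ, G x := by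
  rw [prod_range_zmod (fun y => G (u - y))]
  exact Fintype.prod_equiv (Equiv.subLeft u) _ _ (fun x => rfl)

lemma qt_cast (hr : ∀ b : ℤ, r (b + ℓ) = r b) [NeZero ℓ] (y : ℤ) :
    qt ℓ r y = qt ℓ r (((y : ZMod ℓ).val : ℕ) : ℤ) := by
  refine qt_per hr ?_
  push_cast
  rw [ZMod.natCast_val, ZMod.cast_id]

lemma window (hr : ∀ b : ℤ, r (b + ℓ) = r b) (hℓ : ℓ ≠ 0) (c : ℤ) :
    ∏ b ∈ Finset.range ℓ, qt ℓ r (c - (b : ℤ)) = ∏ b ∈ Finset.range ℓ, qt ℓ r ((b : ℕ) : ℤ) := by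
  haveI : NeZero ℓ := ⟨hℓ⟩
  have h1 : ∀ b : ℕ, qt ℓ r (c - (b : ℤ)) =
      (fun x : ZMod ℓ => qt ℓ r ((x.val : ℕ) : ℤ)) ((c : ZMod ℓ) - (b : ZMod ℓ)) := by
    intro b
    refine (qt_cast hr _).trans ?_
    simp only
    congr 2
    push_cast
    ring
  have h2 : ∀ b : ℕ, qt ℓ r ((b : ℕ) : ℤ) =
      (fun x : ZMod ℓ => qt ℓ r ((x.val : ℕ) : ℤ)) ((b : ℕ) : ZMod ℓ) := by
    intro b
    refine (qt_cast hr _).trans ?_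
    simp only
    congr 3
    push_cast
    rfl
  calc ∏ b ∈ Finset.range ℓ, qt ℓ r (c - (b : ℤ))
      = ∏ b ∈ Finset.range ℓ, (fun x : ZMod ℓ => qt ℓ r ((x.val : ℕ) : ℤ))
          ((c : ZMod ℓ) - (b : ZMod ℓ)) := Finset.prod_congr rfl fun b _ => h1 b
    _ = ∏ x : ZMod ℓ, qt ℓ r ((x.val : ℕ) : ℤ) := prod_range_zmod_sub (fun x : ZMod ℓ => qt ℓ r ((x.val : ℕ) : ℤ)) ((c : ZMod ℓ))
    _ = ∏ b ∈ Finset.range ℓ, (fun x : ZMod ℓ => qt ℓ r ((x.val : ℕ) : ℤ))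
          ((b : ℕ) : ZMod ℓ) := (prod_range_zmod _).symm
    _ = ∏ b ∈ Finset.range ℓ, qt ℓ r ((b : ℕ) : ℤ) :=
        Finset.prod_congr rfl fun b _ => (h2 b).symm

end Periodic
end Stmt1Aux

namespace Stmt1Aux
open Finset MvPowerSeries LaurentPolynomial

section TProps
variable {ℓ : ℕ} {r : ℤ → ℕ} {a p : ℤ}

/-- the element `z`. -/
def zz (ℓ : ℕ) (r : ℤ → ℕ) : S ℓ := ∏ b ∈ Finset.range ℓ, qt ℓ r ((b : ℕ) : ℤ)

lemma t_add_ell (hr : ∀ b : ℤ, r (b + ℓ) = r b) (hℓ : ℓ ≠ 0) (h : ℕ) :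
    t ℓ r a p (h + ℓ) = t ℓ r a p h * zz ℓ r := by
  rw [t, t, Finset.prod_range_add, mul_assoc]
  refine congrArg (_ * ·) ?_
  refine congrArg (_ * ·) ?_
  have h2 : ∀ x ∈ Finset.range ℓ, qt ℓ r (a - ((h + x : ℕ) : ℤ)) =
      qt ℓ r ((a - (h : ℤ)) - (x : ℤ)) := by
    intro x _
    congr 1
    push_cast
    ring
  rw [Finset.prod_congr rfl h2, window hr hℓ, zz]

lemma t_mul_z (hr : ∀ b : ℤ, r (b + ℓ) = r b) (hℓ : ℓ ≠ 0) (k c : ℕ) :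
    t ℓ r a p (k * ℓ + c) = t ℓ r a p c * zz ℓ r ^ k := by
  induction k with
  | zero => simp
  | succ n ih =>
    have h1 : (n + 1) * ℓ + c = (n * ℓ + c) + ℓ := by ring
    rw [h1, t_add_ell hr hℓ, ih, pow_succ, mul_assoc]

lemma t_c_eq (c : ℕ) :
    t ℓ r a p c = MvPowerSeries.C (σ := ZMod ℓ) (R := R) (T (-2 * p)) *
      ∏ b ∈ Finset.range c, qt ℓ r (a - (b : ℤ)) := rfl

lemma C_z_pow_eq_t (hr : ∀ b : ℤ, r (b + ℓ) = r b) (hℓ : ℓ ≠ 0) (k : ℕ) :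
    MvPowerSeries.C (σ := ZMod ℓ) (R := R) (T (-2 * p)) * zz ℓ r ^ k = t ℓ r a p (k * ℓ) := by
  have h1 := t_mul_z (a := a) (p := p) hr hℓ k 0
  rw [add_zero] at h1
  rw [h1, t_c_eq]
  simp

lemma C_z_pow_mul_eq_t (hr : ∀ b : ℤ, r (b + ℓ) = r b) (hℓ : ℓ ≠ 0) (k c : ℕ) :
    MvPowerSeries.C (σ := ZMod ℓ) (R := R) (T (-2 * p)) * zz ℓ r ^ k *
      ∏ b ∈ Finset.range c, qt ℓ r (a - (b : ℤ)) = t ℓ r a p (k * ℓ + c) := by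
  rw [t_mul_z hr hℓ k c, t_c_eq]
  ring

lemma coeff_t_ne {d : ZMod ℓ →₀ ℕ} {h : ℕ} (hd : deg d ≠ h) :
    MvPowerSeries.coeff (R := R) d (t ℓ r a p h) = 0 := by
  classical
  rw [t_eq_monomial, coeff_monomial, if_neg]
  intro he
  exact hd (by rw [he, deg_E])

lemma isUnit_one_sub_t (h : ℕ) (hh : 1 ≤ h) : IsUnit (1 - t ℓ r a p h) := by
  rw [isUnit_iff_constantCoeff, map_sub, map_one, ← coeff_zero_eq_constantCoeff]
  rw [coeff_t_ne (by simp; omega), sub_zero]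
  exact isUnit_one

/-- `A` agrees with `1` in total degrees `≤ n`. -/
def OneUpTo (n : ℕ) (A : S ℓ) : Prop :=
  ∀ d : ZMod ℓ →₀ ℕ, deg d ≤ n → MvPowerSeries.coeff (R := R) d A = MvPowerSeries.coeff (R := R) d 1

lemma oneUpTo_one (n : ℕ) : OneUpTo n (1 : S ℓ) := fun _ _ => rfl

lemma mul_oneUpTo {n : ℕ} {A B : S ℓ} (hB : OneUpTo n B) {d : ZMod ℓ →₀ ℕ}
    (hd : deg d ≤ n) : MvPowerSeries.coeff (R := R) d (A * B) = MvPowerSeries.coeff (R := R) d A := by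
  classical
  rw [coeff_mul]
  rw [Finset.sum_eq_single (d, 0)]
  · show MvPowerSeries.coeff (R := R) d A * MvPowerSeries.coeff (R := R) 0 B = MvPowerSeries.coeff (R := R) d A
    rw [hB 0 (by simp), coeff_one, if_pos rfl, mul_one]
  · rintro ⟨i, j⟩ hij hne
    show MvPowerSeries.coeff (R := R) i A * MvPowerSeries.coeff (R := R) j B = 0
    rw [Finset.HasAntidiagonal.mem_antidiagonal] at hij
    have hj : j ≠ 0 := by
      rintro rfl
      exact hne (by rw [← hij, add_zero])
    have hdj : deg j ≤ n := by
      have : deg i + deg j = deg d := by rw [← deg_add, hij]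
      omega
    rw [hB j hdj, coeff_one, if_neg hj, mul_zero]
  · intro hmem
    exact absurd (Finset.HasAntidiagonal.mem_antidiagonal.2 (add_zero d)) hmem

lemma OneUpTo.mul {n : ℕ} {A B : S ℓ} (hA : OneUpTo n A) (hB : OneUpTo n B) :
    OneUpTo n (A * B) := fun d hd => by rw [mul_oneUpTo hB hd, hA d hd]

lemma OneUpTo.of_mul_eq_one {n : ℕ} {A B : S ℓ} (hAB : A * B = 1) (hA : OneUpTo n A) :
    OneUpTo n B := by
  intro d hd
  have : MvPowerSeries.coeff (R := R) d (B * A) = MvPowerSeries.coeff (R := R) d B := mul_oneUpTo hA hd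
  rw [mul_comm, hAB] at this
  exact this.symm

lemma oneUpTo_prod {n : ℕ} {ι : Type*} (s : Finset ι) (f : ι → S ℓ)
    (hf : ∀ i ∈ s, OneUpTo n (f i)) : OneUpTo n (∏ i ∈ s, f i) := by
  classical
  induction s using Finset.induction_on with
  | empty => simpa using oneUpTo_one n
  | insert _ _ hx ih =>
    rw [Finset.prod_insert hx]
    exact (hf _ (Finset.mem_insert_self _ _)).mul
      (ih fun i hi => hf i (Finset.mem_insert_of_mem hi))

lemma oneUpTo_one_sub_t {n h : ℕ} (hn : n < h) : OneUpTo n (1 - t ℓ r a p h) := by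
  intro d hd
  rw [map_sub, coeff_t_ne (by omega), sub_zero]

lemma oneUpTo_inverse {n : ℕ} {A : S ℓ} (hA : OneUpTo n A) (hU : IsUnit A) :
    OneUpTo n (Ring.inverse A) :=
  OneUpTo.of_mul_eq_one (Ring.mul_inverse_cancel A hU) hA

/-- The `k`-th regrouped factor. -/
def Fct (ℓ : ℕ) (r : ℤ → ℕ) (a p : ℤ) (k : ℕ) : S ℓ :=
  ∏ c ∈ Finset.Icc 1 ℓ, Ring.inverse (1 - t ℓ r a p (k * ℓ + c))

lemma oneUpTo_Fct {n k : ℕ} (hn : n ≤ k * ℓ) : OneUpTo n (Fct ℓ r a p k) := by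
  refine oneUpTo_prod _ _ fun c hc => ?_
  have hc1 : 1 ≤ c := (Finset.mem_Icc.1 hc).1
  exact oneUpTo_inverse (oneUpTo_one_sub_t (by omega)) (isUnit_one_sub_t _ (by omega))

end TProps
end Stmt1Aux

namespace Stmt1Aux
open Finset MvPowerSeries LaurentPolynomial

section Prod
variable {ℓ : ℕ} {r : ℤ → ℕ} {a p : ℤ}

/-- The value of the infinite product. -/
def PP (ℓ : ℕ) (r : ℤ → ℕ) (a p : ℤ) : S ℓ :=
  fun d => MvPowerSeries.coeff (R := R) d (∏ k ∈ Finset.range (deg d + 1), Fct ℓ r a p k)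

lemma coeff_PP (d : ZMod ℓ →₀ ℕ) :
    MvPowerSeries.coeff (R := R) d (PP ℓ r a p) =
      MvPowerSeries.coeff (R := R) d (∏ k ∈ Finset.range (deg d + 1), Fct ℓ r a p k) := rfl

lemma coeff_prod_Fct_stable (hℓ : ℓ ≠ 0) {n : ℕ} {d : ZMod ℓ →₀ ℕ} (hd : deg d ≤ n)
    (F : Finset ℕ) (hF : Finset.range (n + 1) ⊆ F) :
    MvPowerSeries.coeff (R := R) d (∏ k ∈ F, Fct ℓ r a p k) =
      MvPowerSeries.coeff (R := R) d (∏ k ∈ Finset.range (n + 1), Fct ℓ r a p k) := by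
  rw [← Finset.prod_sdiff hF, mul_comm]
  refine mul_oneUpTo ?_ hd
  refine oneUpTo_prod _ _ fun k hk => ?_
  have hk1 : n + 1 ≤ k := by
    rcases Finset.mem_sdiff.1 hk with ⟨_, hk2⟩
    simpa using hk2
  refine oneUpTo_Fct ?_
  calc n ≤ k := by omega
    _ ≤ k * ℓ := Nat.le_mul_of_pos_right k (Nat.pos_of_ne_zero hℓ)

lemma coeff_PP_eq (hℓ : ℓ ≠ 0) {N : ℕ} {d : ZMod ℓ →₀ ℕ} (hN : deg d < N) :
    MvPowerSeries.coeff (R := R) d (PP ℓ r a p) =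
      MvPowerSeries.coeff (R := R) d (∏ k ∈ Finset.range N, Fct ℓ r a p k) := by
  rw [coeff_PP, ← coeff_prod_Fct_stable hℓ (le_refl (deg d)) (Finset.range N)
    (Finset.range_subset_range.2 (by omega))]

lemma hasProd_Fct (hℓ : ℓ ≠ 0) : HasProd (Fct ℓ r a p) (PP ℓ r a p) := by
  rw [HasProd]
  rw [show (nhds (PP ℓ r a p)) = _ from rfl]
  refine tendsto_pi_nhds.2 ?_
  intro d
  refine Filter.Tendsto.congr' ?_ tendsto_const_nhds
  filter_upwards [Filter.eventually_ge_atTop (Finset.range (deg d + 1))] with F hF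
  show PP ℓ r a p d = (∏ k ∈ F, Fct ℓ r a p k) d
  have h1 := coeff_prod_Fct_stable (r := r) (a := a) (p := p) hℓ (le_refl (deg d)) F hF
  rw [coeff_apply, coeff_apply] at h1
  rw [h1]
  rfl

lemma multipliable_Fct (hℓ : ℓ ≠ 0) : Multipliable (Fct ℓ r a p) :=
  ⟨_, hasProd_Fct hℓ⟩

lemma tprod_Fct (hℓ : ℓ ≠ 0) : ∏' k, Fct ℓ r a p k = PP ℓ r a p :=
  (hasProd_Fct hℓ).tprod_eq

end Prod
end Stmt1Aux

namespace Stmt1Aux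
open Finset MvPowerSeries LaurentPolynomial

section Young

lemma cell_row_lt_card {μ : YoungDiagram} {i j : ℕ} (h : (i, j) ∈ μ) : i < μ.cells.card := by
  have hsub : (Finset.range (i + 1)).image (fun i' => (i', j)) ⊆ μ.cells := by
    intro c hc
    simp only [Finset.mem_image, Finset.mem_range] at hc
    obtain ⟨i', hi', rfl⟩ := hc
    rw [YoungDiagram.mem_cells]
    exact μ.up_left_mem (by omega) le_rfl h
  have hcard := Finset.card_le_card hsub
  rw [Finset.card_image_of_injective _ (fun x y hxy => by simpa using hxy),
    Finset.card_range] at hcard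
  omega

lemma cell_col_lt_card {μ : YoungDiagram} {i j : ℕ} (h : (i, j) ∈ μ) : j < μ.cells.card := by
  have hsub : (Finset.range (j + 1)).image (fun j' => (i, j')) ⊆ μ.cells := by
    intro c hc
    simp only [Finset.mem_image, Finset.mem_range] at hc
    obtain ⟨j', hj', rfl⟩ := hc
    rw [YoungDiagram.mem_cells]
    exact μ.up_left_mem le_rfl (by omega) h
  have hcard := Finset.card_le_card hsub
  rw [Finset.card_image_of_injective _ (fun x y hxy => by simpa using hxy),
    Finset.card_range] at hcard
  omega

lemma colLen_le_card (μ : YoungDiagram) (j : ℕ) : μ.colLen j ≤ μ.cells.card := by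
  rcases Nat.eq_zero_or_pos (μ.colLen j) with h | h
  · omega
  · have : (μ.colLen j - 1, j) ∈ μ := YoungDiagram.mem_iff_lt_colLen.2 (by omega)
    have := cell_row_lt_card this
    omega

lemma mem_lt_ncols {μ : YoungDiagram} {i j : ℕ} (h : (i, j) ∈ μ) : j < μ.ncols := by
  have h0 : (0, j) ∈ μ := μ.up_left_mem (by omega) le_rfl h
  rw [YoungDiagram.mem_iff_lt_rowLen] at h0
  exact h0

lemma finite_card_le (n : ℕ) : {μ : YoungDiagram | μ.cells.card ≤ n}.Finite := by
  have hsub : {μ : YoungDiagram | μ.cells.card ≤ n} ⊆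
      YoungDiagram.cells ⁻¹' ↑((Finset.range n ×ˢ Finset.range n).powerset) := by
    intro μ hμ
    simp only [Set.mem_preimage, Finset.coe_powerset, Set.mem_preimage, Set.mem_setOf_eq,
      Set.mem_powerset_iff, Finset.coe_subset] at *
    intro c hc
    rw [YoungDiagram.mem_cells] at hc
    rcases c with ⟨i, j⟩
    have h1 := cell_row_lt_card hc
    have h2 := cell_col_lt_card hc
    simp only [Finset.mem_product, Finset.mem_range]
    omega
  refine Set.Finite.subset (Set.Finite.preimage ?_ (Finset.finite_toSet _)) hsub
  intro x _ y _ hxy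
  exact YoungDiagram.ext hxy

lemma sum_cells {M : Type*} [AddCommMonoid M] (μ : YoungDiagram) (f : ℕ → M) :
    ∑ c ∈ μ.cells, f c.1 =
      ∑ j ∈ Finset.range μ.ncols, ∑ i ∈ Finset.range (μ.colLen j), f i := by
  rw [Finset.sum_sigma']
  refine Finset.sum_bij' (fun c _ => (⟨c.2, c.1⟩ : (_ : ℕ) × ℕ)) (fun x _ => (x.2, x.1))
    ?_ ?_ ?_ ?_ ?_
  · rintro ⟨i, j⟩ hc
    rw [YoungDiagram.mem_cells] at hc
    simp only [Finset.mem_sigma, Finset.mem_range]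
    exact ⟨mem_lt_ncols hc, YoungDiagram.mem_iff_lt_colLen.1 hc⟩
  · rintro ⟨j, i⟩ hx
    simp only [Finset.mem_sigma, Finset.mem_range] at hx
    rw [YoungDiagram.mem_cells]
    exact YoungDiagram.mem_iff_lt_colLen.2 hx.2
  · rintro ⟨i, j⟩ _; rfl
  · rintro ⟨j, i⟩ _; rfl
  · rintro ⟨i, j⟩ _; rfl

lemma card_eq_sum_colLens (μ : YoungDiagram) :
    μ.cells.card = ∑ j ∈ Finset.range μ.ncols, μ.colLen j := by
  have h := sum_cells μ (fun _ => (1 : ℕ))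
  rw [← Finset.card_eq_sum_ones] at h
  simpa using h

end Young
end Stmt1Aux

namespace Stmt1Aux
open Finset MvPowerSeries LaurentPolynomial

section PreDel

lemma colLen_eq_of {μ : YoungDiagram} {j n : ℕ} (h : ∀ i, (i, j) ∈ μ ↔ i < n) :
    μ.colLen j = n := by
  by_contra hne
  rcases Nat.lt_or_ge (μ.colLen j) n with hlt | hge
  · have := (h (μ.colLen j)).2 hlt
    rw [YoungDiagram.mem_iff_lt_colLen] at this
    omega
  · have hne' : μ.colLen j ≠ n := hne
    have hn : n < μ.colLen j := by omega
    have := (h n).1 (YoungDiagram.mem_iff_lt_colLen.2 hn)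
    omega

lemma rowLen_eq_of {μ : YoungDiagram} {i n : ℕ} (h : ∀ j, (i, j) ∈ μ ↔ j < n) :
    μ.rowLen i = n := by
  by_contra hne
  rcases Nat.lt_or_ge (μ.rowLen i) n with hlt | hge
  · have := (h (μ.rowLen i)).2 hlt
    rw [YoungDiagram.mem_iff_lt_rowLen] at this
    omega
  · have hn : n < μ.rowLen i := by omega
    have := (h n).1 (YoungDiagram.mem_iff_lt_rowLen.2 hn)
    omega

/-- Cells of "prepend a column of height `m`". -/
def preCells (m : ℕ) (μ : YoungDiagram) : Finset (ℕ × ℕ) :=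
  ((Finset.range m).image fun i => (i, 0)) ∪ (μ.cells.image fun c => (c.1, c.2 + 1))

lemma mem_preCells {m : ℕ} {μ : YoungDiagram} {i j : ℕ} :
    (i, j) ∈ preCells m μ ↔ (j = 0 ∧ i < m) ∨ (1 ≤ j ∧ (i, j - 1) ∈ μ) := by
  simp only [preCells, Finset.mem_union, Finset.mem_image, Finset.mem_range,
    Prod.mk.injEq]
  constructor
  · rintro (⟨x, hx, rfl, rfl⟩ | ⟨⟨ci, cj⟩, hc, rfl, rfl⟩)
    · exact Or.inl ⟨rfl, hx⟩
    · refine Or.inr ⟨by omega, ?_⟩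
      simpa [YoungDiagram.mem_cells] using hc
  · rintro (⟨rfl, hi⟩ | ⟨hj, hmem⟩)
    · exact Or.inl ⟨i, hi, rfl, rfl⟩
    · refine Or.inr ⟨(i, j - 1), by simpa [YoungDiagram.mem_cells] using hmem, rfl, by omega⟩

/-- Prepend a column of height `m` (at column index 0) to `μ`. -/
def pre (m : ℕ) (μ : YoungDiagram) (hm : μ.colLen 0 ≤ m) : YoungDiagram where
  cells := preCells m μ
  isLowerSet := by
    rintro ⟨i, j⟩ ⟨i', j'⟩ hle hmem
    rw [Finset.mem_coe, mem_preCells] at hmem ⊢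
    have hi : i' ≤ i := hle.1
    have hj : j' ≤ j := hle.2
    rcases hmem with ⟨hj0, him⟩ | ⟨hj1, hmem⟩
    · exact Or.inl ⟨by omega, by omega⟩
    · rcases Nat.eq_zero_or_pos j' with hj0' | hj1'
      · refine Or.inl ⟨hj0', ?_⟩
        have h1 : i < μ.colLen (j - 1) := YoungDiagram.mem_iff_lt_colLen.1 hmem
        have h2 : μ.colLen (j - 1) ≤ μ.colLen 0 := μ.colLen_anti 0 (j - 1) (by omega)
        omega
      · refine Or.inr ⟨by omega, ?_⟩
        exact μ.up_left_mem hi (by omega) hmem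

lemma mem_pre {m : ℕ} {μ : YoungDiagram} {hm : μ.colLen 0 ≤ m} {i j : ℕ} :
    (i, j) ∈ pre m μ hm ↔ (j = 0 ∧ i < m) ∨ (1 ≤ j ∧ (i, j - 1) ∈ μ) := by
  rw [← YoungDiagram.mem_cells]
  exact mem_preCells

/-- Delete the column of index 0. -/
def del (ν : YoungDiagram) : YoungDiagram where
  cells := (ν.cells.filter fun c => 1 ≤ c.2).image fun c => (c.1, c.2 - 1)
  isLowerSet := by
    rintro ⟨i, j⟩ ⟨i', j'⟩ hle hmem
    simp only [Finset.coe_image, Set.mem_image, Finset.mem_coe, Finset.mem_filter] at hmem ⊢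
    obtain ⟨⟨ci, cj⟩, ⟨hc, hc1⟩, hce⟩ := hmem
    obtain ⟨rfl, rfl⟩ : ci = i ∧ cj - 1 = j := by
      constructor
      · exact congrArg Prod.fst hce
      · exact congrArg Prod.snd hce
    refine ⟨(i', j' + 1), ⟨?_, by omega⟩, by simp⟩
    rw [YoungDiagram.mem_cells] at hc ⊢
    exact ν.up_left_mem hle.1 (by have := hle.2; omega) hc

lemma mem_del {ν : YoungDiagram} {i j : ℕ} : (i, j) ∈ del ν ↔ (i, j + 1) ∈ ν := by
  rw [← YoungDiagram.mem_cells]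
  rw [show (del ν).cells = (ν.cells.filter fun c => 1 ≤ c.2).image fun c => (c.1, c.2 - 1) from rfl]
  simp only [Finset.mem_image, Finset.mem_filter, Prod.mk.injEq]
  constructor
  · rintro ⟨⟨ci, cj⟩, ⟨hc, hc1⟩, rfl, rfl⟩
    rw [YoungDiagram.mem_cells] at hc
    have : cj - 1 + 1 = cj := by omega
    rwa [this]
  · intro h
    exact ⟨(i, j + 1), ⟨by rwa [YoungDiagram.mem_cells], by omega⟩, rfl, by omega⟩

lemma del_pre {m : ℕ} {μ : YoungDiagram} (hm : μ.colLen 0 ≤ m) : del (pre m μ hm) = μ := by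
  ext ⟨i, j⟩
  rw [YoungDiagram.mem_cells, YoungDiagram.mem_cells, mem_del, mem_pre]
  constructor
  · rintro (⟨h, _⟩ | ⟨_, h⟩)
    · omega
    · simpa using h
  · intro h
    exact Or.inr ⟨by omega, by simpa using h⟩

lemma colLen_del (ν : YoungDiagram) (j : ℕ) : (del ν).colLen j = ν.colLen (j + 1) :=
  colLen_eq_of fun i => by rw [mem_del, YoungDiagram.mem_iff_lt_colLen]

lemma colLen_pre_zero {m : ℕ} {μ : YoungDiagram} (hm : μ.colLen 0 ≤ m) :
    (pre m μ hm).colLen 0 = m :=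
  colLen_eq_of fun i => by
    rw [mem_pre]
    constructor
    · rintro (⟨_, h⟩ | ⟨h, _⟩) <;> omega
    · intro h
      exact Or.inl ⟨rfl, h⟩

lemma colLen_pre_succ {m : ℕ} {μ : YoungDiagram} (hm : μ.colLen 0 ≤ m) (j : ℕ) :
    (pre m μ hm).colLen (j + 1) = μ.colLen j :=
  colLen_eq_of fun i => by
    rw [mem_pre]
    constructor
    · rintro (⟨h, _⟩ | ⟨_, h⟩)
      · omega
      · rw [YoungDiagram.mem_iff_lt_colLen] at h
        simpa using h
    · intro h
      exact Or.inr ⟨by omega, by simpa using YoungDiagram.mem_iff_lt_colLen.2 h⟩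

lemma pre_del {m : ℕ} {ν : YoungDiagram} (hν : ν.colLen 0 = m) :
    pre m (del ν) (by rw [colLen_del]; rw [← hν]; exact ν.colLen_anti 0 1 (by omega)) = ν := by
  ext ⟨i, j⟩
  rw [YoungDiagram.mem_cells, YoungDiagram.mem_cells, mem_pre]
  constructor
  · rintro (⟨rfl, h⟩ | ⟨h1, h⟩)
    · rw [YoungDiagram.mem_iff_lt_colLen, hν]
      exact h
    · rw [mem_del] at h
      have : j - 1 + 1 = j := by omega
      rwa [this] at h
  · intro h
    rcases Nat.eq_zero_or_pos j with rfl | hj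
    · refine Or.inl ⟨rfl, ?_⟩
      rw [YoungDiagram.mem_iff_lt_colLen, hν] at h
      exact h
    · refine Or.inr ⟨by omega, ?_⟩
      rw [mem_del]
      have : j - 1 + 1 = j := by omega
      rwa [this]

lemma ncols_pre {m : ℕ} {μ : YoungDiagram} (hm : μ.colLen 0 ≤ m) (hm1 : 1 ≤ m) :
    (pre m μ hm).ncols = μ.ncols + 1 :=
  rowLen_eq_of fun j => by
    rw [mem_pre]
    constructor
    · rintro (⟨rfl, _⟩ | ⟨h1, h⟩)
      · omega
      · have := mem_lt_ncols h
        omega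
    · intro h
      rcases Nat.eq_zero_or_pos j with rfl | hj
      · exact Or.inl ⟨rfl, hm1⟩
      · refine Or.inr ⟨by omega, ?_⟩
        have hj1 : j - 1 < μ.ncols := by omega
        rw [YoungDiagram.mem_iff_lt_colLen]
        rw [YoungDiagram.ncols, ← YoungDiagram.mem_iff_lt_rowLen] at hj1
        rw [YoungDiagram.mem_iff_lt_colLen] at hj1
        omega

lemma card_pre {m : ℕ} {μ : YoungDiagram} (hm : μ.colLen 0 ≤ m) (hm1 : 1 ≤ m) :
    (pre m μ hm).cells.card = μ.cells.card + m := by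
  rw [card_eq_sum_colLens, card_eq_sum_colLens, ncols_pre hm hm1, Finset.sum_range_succ',
    colLen_pre_zero hm]
  have : ∀ j ∈ Finset.range μ.ncols, (pre m μ hm).colLen (j + 1) = μ.colLen j :=
    fun j _ => colLen_pre_succ hm j
  rw [Finset.sum_congr rfl this]

end PreDel
end Stmt1Aux

namespace Stmt1Aux
open Finset MvPowerSeries LaurentPolynomial

section TermSec
variable {ℓ : ℕ} {r : ℤ → ℕ} {a p : ℤ}

/-- The contribution of the diagram `μ`. -/
def Term (ℓ : ℕ) (r : ℤ → ℕ) (a p : ℤ) (μ : YoungDiagram) : S ℓ :=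
  ∏ i ∈ Finset.range μ.ncols, t ℓ r a p (μ.colLen i)

def Emu (ℓ : ℕ) (a : ℤ) (μ : YoungDiagram) : ZMod ℓ →₀ ℕ :=
  ∑ j ∈ Finset.range μ.ncols, E ℓ a (μ.colLen j)

def gmu (r : ℤ → ℕ) (a p : ℤ) (μ : YoungDiagram) : ℤ :=
  ∑ j ∈ Finset.range μ.ncols, g r a p (μ.colLen j)

lemma prod_monomial {ι : Type*} (s : Finset ι) (e : ι → (ZMod ℓ →₀ ℕ)) (x : ι → ℤ) :
    (∏ i ∈ s, (monomial (R := R) (e i) (T (x i)) : S ℓ)) =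
      monomial (R := R) (∑ i ∈ s, e i) (T (∑ i ∈ s, x i)) := by
  classical
  induction s using Finset.induction_on with
  | empty =>
    rw [Finset.prod_empty, Finset.sum_empty, Finset.sum_empty, T_zero,
      monomial_zero_eq_C_apply, map_one]
  | insert _ _ hx ih =>
    rw [Finset.prod_insert hx, ih, Finset.sum_insert hx, Finset.sum_insert hx,
      monomial_mul_monomial, ← T_add]

lemma Term_eq_monomial (μ : YoungDiagram) :
    Term ℓ r a p μ = monomial (R := R) (Emu ℓ a μ) (T (gmu r a p μ)) := by
  rw [Term, Emu, gmu, ← prod_monomial]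
  exact Finset.prod_congr rfl fun i _ => t_eq_monomial ℓ r a p _

lemma deg_sum {ι : Type*} (s : Finset ι) (e : ι → (ZMod ℓ →₀ ℕ)) :
    deg (∑ i ∈ s, e i) = ∑ i ∈ s, deg (e i) := by
  classical
  induction s using Finset.induction_on with
  | empty => simp
  | insert _ _ hx ih => rw [Finset.sum_insert hx, Finset.sum_insert hx, deg_add, ih]

lemma deg_Emu (μ : YoungDiagram) : deg (Emu ℓ a μ) = μ.cells.card := by
  rw [Emu, deg_sum, card_eq_sum_colLens]
  exact Finset.sum_congr rfl fun j _ => deg_E ℓ a _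

lemma coeff_Term_ne {d : ZMod ℓ →₀ ℕ} {μ : YoungDiagram} (h : μ.cells.card ≠ deg d) :
    MvPowerSeries.coeff (R := R) d (Term ℓ r a p μ) = 0 := by
  classical
  rw [Term_eq_monomial, coeff_monomial, if_neg]
  intro he
  rw [he] at h
  exact h (deg_Emu μ).symm

lemma ncols_bot : (⊥ : YoungDiagram).ncols = 0 :=
  rowLen_eq_of fun j => by simp [YoungDiagram.notMem_bot]

lemma Term_bot : Term ℓ r a p ⊥ = 1 := by
  rw [Term, ncols_bot]
  simp

lemma colLen_bot (j : ℕ) : (⊥ : YoungDiagram).colLen j = 0 :=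
  colLen_eq_of fun i => by simp [YoungDiagram.notMem_bot]

lemma eq_bot_of_colLen_zero {μ : YoungDiagram} (h : μ.colLen 0 = 0) : μ = ⊥ := by
  ext ⟨i, j⟩
  simp only [YoungDiagram.cells_bot, Finset.notMem_empty, iff_false]
  intro hc
  rw [YoungDiagram.mem_cells] at hc
  have h1 : (i, 0) ∈ μ := μ.up_left_mem le_rfl (by omega) hc
  rw [YoungDiagram.mem_iff_lt_colLen, h] at h1
  omega

lemma Term_pre {m : ℕ} {μ : YoungDiagram} (hm : μ.colLen 0 ≤ m) (hm1 : 1 ≤ m) :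
    Term ℓ r a p (pre m μ hm) = t ℓ r a p m * Term ℓ r a p μ := by
  rw [Term, Term, ncols_pre hm hm1, Finset.prod_range_succ', colLen_pre_zero hm]
  rw [Finset.prod_congr rfl fun i (_ : i ∈ Finset.range μ.ncols) => by
    rw [colLen_pre_succ hm i]]
  ring

end TermSec
end Stmt1Aux

namespace Stmt1Aux
open Finset MvPowerSeries LaurentPolynomial

section Sig
variable {ℓ : ℕ} {r : ℤ → ℕ} {a p : ℤ}

lemma finite_Fset (m n : ℕ) :
    {μ : YoungDiagram | μ.colLen 0 ≤ m ∧ μ.cells.card ≤ n}.Finite :=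
  (finite_card_le n).subset fun _ hμ => hμ.2

def Fm (m n : ℕ) : Finset YoungDiagram := (finite_Fset m n).toFinset

lemma mem_Fm {m n : ℕ} {μ : YoungDiagram} :
    μ ∈ Fm m n ↔ μ.colLen 0 ≤ m ∧ μ.cells.card ≤ n :=
  Set.Finite.mem_toFinset _

/-- The partial sum over diagrams with columns of height at most `m`. -/
def Sig (ℓ : ℕ) (r : ℤ → ℕ) (a p : ℤ) (m : ℕ) : S ℓ :=
  fun d => ∑ μ ∈ Fm m (deg d), MvPowerSeries.coeff (R := R) d (Term ℓ r a p μ)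

lemma coeff_Sig (m : ℕ) (d : ZMod ℓ →₀ ℕ) :
    MvPowerSeries.coeff (R := R) d (Sig ℓ r a p m) =
      ∑ μ ∈ Fm m (deg d), MvPowerSeries.coeff (R := R) d (Term ℓ r a p μ) := rfl

lemma coeff_Sig_eq_of {m : ℕ} {d : ZMod ℓ →₀ ℕ} (G : Finset YoungDiagram)
    (hsub : Fm m (deg d) ⊆ G) (hG : ∀ μ ∈ G, μ.colLen 0 ≤ m) :
    ∑ μ ∈ G, MvPowerSeries.coeff (R := R) d (Term ℓ r a p μ) =
      MvPowerSeries.coeff (R := R) d (Sig ℓ r a p m) := by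
  rw [coeff_Sig]
  refine (Finset.sum_subset hsub fun μ hμG hμnot => ?_).symm
  refine coeff_Term_ne fun hcard => ?_
  exact hμnot (mem_Fm.2 ⟨hG μ hμG, by omega⟩)

lemma Sig_succ (m : ℕ) :
    Sig ℓ r a p (m + 1) = Sig ℓ r a p m + t ℓ r a p (m + 1) * Sig ℓ r a p (m + 1) := by
  ext d
  rw [map_add]
  set n := deg d with hn
  rw [coeff_Sig]
  rw [← Finset.sum_filter_add_sum_filter_not (Fm (m + 1) n)
    (fun μ => μ.colLen 0 ≤ m)]
  have hfil : (Fm (m + 1) n).filter (fun μ => μ.colLen 0 ≤ m) = Fm m n := by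
    ext μ
    simp only [Finset.mem_filter, mem_Fm]
    constructor
    · rintro ⟨⟨_, h2⟩, h3⟩; exact ⟨h3, h2⟩
    · rintro ⟨h1, h2⟩; exact ⟨⟨by omega, h2⟩, h1⟩
  rw [hfil, ← coeff_Sig]
  have hB : ∀ ν ∈ (Fm (m + 1) n).filter (fun μ => ¬ μ.colLen 0 ≤ m),
      ν.colLen 0 = m + 1 ∧ ν.cells.card ≤ n := by
    intro ν hν
    rw [Finset.mem_filter, mem_Fm] at hν
    exact ⟨by omega, hν.1.2⟩
  have hTν : ∀ ν ∈ (Fm (m + 1) n).filter (fun μ => ¬ μ.colLen 0 ≤ m),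
      Term ℓ r a p ν = t ℓ r a p (m + 1) * Term ℓ r a p (del ν) := by
    intro ν hν
    conv_lhs => rw [← pre_del (hB ν hν).1]
    rw [Term_pre _ (by omega)]
  have hkey : ∑ x ∈ (Fm (m + 1) n).filter (fun μ => ¬ μ.colLen 0 ≤ m),
      MvPowerSeries.coeff (R := R) d (Term ℓ r a p x) =
      MvPowerSeries.coeff (R := R) d (t ℓ r a p (m + 1) * Sig ℓ r a p (m + 1)) := by
   rw [t_eq_monomial, coeff_monomial_mul]
   by_cases hE : E ℓ a (m + 1) ≤ d
   · rw [if_pos hE]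
     have hdegE : deg (E ℓ a (m + 1)) = m + 1 := deg_E ℓ a (m + 1)
     have hmn : m + 1 ≤ n := by
       have := deg_mono hE
       omega
     have hdeg' : deg (d - E ℓ a (m + 1)) = n - (m + 1) := by
       rw [deg_sub hE, hdegE]
     rw [coeff_Sig (m + 1) (d - E ℓ a (m + 1)), Finset.mul_sum]
     refine Finset.sum_bij' (fun ν _ => del ν)
       (fun μ hμ => pre (m + 1) μ (by
         rw [mem_Fm] at hμ
         exact hμ.1)) ?_ ?_ ?_ ?_ ?_
     · intro ν hν
       show del ν ∈ Fm (m + 1) (deg (d - E ℓ a (m + 1)))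
       rw [mem_Fm, hdeg']
       have h1 := (hB ν hν).1
       have h2 := (hB ν hν).2
       constructor
       · rw [colLen_del]
         calc ν.colLen 1 ≤ ν.colLen 0 := ν.colLen_anti 0 1 (by omega)
           _ = m + 1 := h1
       · have hcard : ν.cells.card = (del ν).cells.card + (m + 1) := by
           conv_lhs => rw [← pre_del h1]
           rw [card_pre _ (by omega)]
         omega
     · intro μ hμ
       rw [Finset.mem_filter, mem_Fm]
       rw [mem_Fm] at hμ
       have hc := card_pre (m := m + 1) (μ := μ) hμ.1 (by omega)
       refine ⟨⟨?_, ?_⟩, ?_⟩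
       · rw [colLen_pre_zero]
       · rw [hc, hdeg'] at *; omega
       · rw [colLen_pre_zero]; omega
     · intro ν hν
       exact pre_del (hB ν hν).1
     · intro μ hμ
       exact del_pre _
     · intro ν hν
       rw [hTν ν hν, t_eq_monomial, coeff_monomial_mul, if_pos hE]
   · rw [if_neg hE]
     refine Finset.sum_eq_zero fun ν hν => ?_
     rw [hTν ν hν, t_eq_monomial, coeff_monomial_mul, if_neg hE]
  rw [hkey]

lemma Sig_zero : Sig ℓ r a p 0 = 1 := by
  ext d
  rw [coeff_Sig]
  have hF : Fm 0 (deg d) = {⊥} := by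
    ext μ
    rw [mem_Fm, Finset.mem_singleton]
    constructor
    · rintro ⟨h1, _⟩
      exact eq_bot_of_colLen_zero (by omega)
    · rintro rfl
      simp [colLen_bot, YoungDiagram.cells_bot]
  rw [hF, Finset.sum_singleton, Term_bot]

lemma Sig_eq_inv_mul (m : ℕ) :
    Sig ℓ r a p (m + 1) = Ring.inverse (1 - t ℓ r a p (m + 1)) * Sig ℓ r a p m := by
  have hU := isUnit_one_sub_t (ℓ := ℓ) (r := r) (a := a) (p := p) (m + 1) (by omega)
  have h1 : (1 - t ℓ r a p (m + 1)) * Sig ℓ r a p (m + 1) = Sig ℓ r a p m := by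
    rw [sub_mul, one_mul]
    nth_rewrite 1 [Sig_succ m]
    ring
  calc Sig ℓ r a p (m + 1)
      = (Ring.inverse (1 - t ℓ r a p (m + 1)) * (1 - t ℓ r a p (m + 1))) *
          Sig ℓ r a p (m + 1) := by rw [Ring.inverse_mul_cancel _ hU, one_mul]
    _ = Ring.inverse (1 - t ℓ r a p (m + 1)) * Sig ℓ r a p m := by rw [mul_assoc, h1]

lemma Sig_eq_prod (m : ℕ) :
    Sig ℓ r a p m = ∏ h ∈ Finset.Icc 1 m, Ring.inverse (1 - t ℓ r a p h) := by
  induction m with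
  | zero =>
    rw [Sig_zero]
    rw [show Finset.Icc 1 0 = ∅ from Finset.Icc_eq_empty (by omega), Finset.prod_empty]
  | succ m ih =>
    rw [Finset.prod_Icc_succ_top (by omega), ← ih, Sig_eq_inv_mul, mul_comm]

end Sig
end Stmt1Aux

namespace Stmt1Aux
open Finset MvPowerSeries LaurentPolynomial

section Bridge
variable {ℓ : ℕ} {r : ℤ → ℕ} {a p : ℤ}

lemma count_lemma (hℓ : ℓ ≠ 0) (μ : YoungDiagram) (x : ZMod ℓ) :
    ∑ j ∈ Finset.range μ.ncols, ∑ i ∈ Finset.range (μ.colLen j),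
        (if ((a - (i : ℤ) : ℤ) : ZMod ℓ) = x then 1 else 0 : ℕ) =
      ncolor ℓ a x.val μ := by
  haveI : NeZero ℓ := ⟨hℓ⟩
  rw [← sum_cells μ (fun i => if ((a - (i : ℤ) : ℤ) : ZMod ℓ) = x then 1 else 0)]
  rw [ncolor, Finset.card_filter]
  refine Finset.sum_congr rfl fun c _ => ?_
  refine if_congr ?_ rfl rfl
  have hx : ((x.val : ℤ) : ZMod ℓ) = x := by
    push_cast
    rw [ZMod.natCast_val, ZMod.cast_id]
  rw [← hx, ZMod.intCast_eq_intCast_iff', hx]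

lemma rsum (hr : ∀ b : ℤ, r (b + ℓ) = r b) (hℓ : ℓ ≠ 0) (y : ℤ) :
    (r y : ℤ) = ∑ c ∈ Finset.range ℓ,
      (if ((y : ZMod ℓ) = (((c : ℕ) : ℤ) : ZMod ℓ)) then (r ((c : ℕ) : ℤ) : ℤ) else 0) := by
  haveI : NeZero ℓ := ⟨hℓ⟩
  rw [Finset.sum_eq_single (y : ZMod ℓ).val]
  · rw [if_pos, rfac hr (x := y) (y := (((y : ZMod ℓ).val : ℕ) : ℤ))]
    · push_cast
      rw [ZMod.natCast_val, ZMod.cast_id]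
    · push_cast
      rw [ZMod.natCast_val, ZMod.cast_id]
  · intro c hc hne
    rw [if_neg]
    intro h
    push_cast at h
    apply hne
    rw [h, ZMod.val_natCast_of_lt (Finset.mem_range.1 hc)]
  · intro hmem
    exact absurd (Finset.mem_range.2 (ZMod.val_lt _)) hmem

lemma key_count (hr : ∀ b : ℤ, r (b + ℓ) = r b) (hℓ : ℓ ≠ 0) (μ : YoungDiagram) :
    ∑ j ∈ Finset.range μ.ncols, ∑ b ∈ Finset.range (μ.colLen j), (r (a - (b : ℤ)) : ℤ) =
      ∑ c ∈ Finset.range ℓ, (ncolor ℓ a c μ : ℤ) * (r ((c : ℕ) : ℤ) : ℤ) := by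
  haveI : NeZero ℓ := ⟨hℓ⟩
  calc ∑ j ∈ Finset.range μ.ncols, ∑ b ∈ Finset.range (μ.colLen j), (r (a - (b : ℤ)) : ℤ)
      = ∑ j ∈ Finset.range μ.ncols, ∑ b ∈ Finset.range (μ.colLen j), ∑ c ∈ Finset.range ℓ,
          (if ((((a - (b : ℤ)) : ℤ) : ZMod ℓ) = (((c : ℕ) : ℤ) : ZMod ℓ))
            then (r ((c : ℕ) : ℤ) : ℤ) else 0) :=
        Finset.sum_congr rfl fun j _ => Finset.sum_congr rfl fun b _ => rsum hr hℓ _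
    _ = ∑ c ∈ Finset.range ℓ, ∑ j ∈ Finset.range μ.ncols, ∑ b ∈ Finset.range (μ.colLen j),
          (if ((((a - (b : ℤ)) : ℤ) : ZMod ℓ) = (((c : ℕ) : ℤ) : ZMod ℓ))
            then (r ((c : ℕ) : ℤ) : ℤ) else 0) := by
        rw [Finset.sum_congr rfl fun j (_ : j ∈ Finset.range μ.ncols) => Finset.sum_comm]
        exact Finset.sum_comm
    _ = ∑ c ∈ Finset.range ℓ, (ncolor ℓ a c μ : ℤ) * (r ((c : ℕ) : ℤ) : ℤ) := by
        refine Finset.sum_congr rfl fun c hc => ?_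
        have hite : ∀ (Q : Prop) [Decidable Q],
            (if Q then (r ((c : ℕ) : ℤ) : ℤ) else 0) =
              (if Q then (1 : ℤ) else 0) * (r ((c : ℕ) : ℤ) : ℤ) := by
          intro Q _
          split_ifs <;> simp
        rw [Finset.sum_congr rfl fun j (_ : j ∈ Finset.range μ.ncols) =>
          Finset.sum_congr rfl fun b (_ : b ∈ Finset.range (μ.colLen j)) => hite _]
        rw [Finset.sum_congr rfl fun j (_ : j ∈ Finset.range μ.ncols) =>
          (Finset.sum_mul _ _ _).symm]
        rw [← Finset.sum_mul]
        congr 1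
        have hx : (((c : ℕ) : ℤ) : ZMod ℓ) = ((c : ℕ) : ZMod ℓ) := by push_cast; rfl
        have hcount := count_lemma (a := a) hℓ μ ((c : ℕ) : ZMod ℓ)
        have hval : ((c : ℕ) : ZMod ℓ).val = c := ZMod.val_natCast_of_lt (Finset.mem_range.1 hc)
        rw [hval] at hcount
        rw [← hcount]
        push_cast [hx]
        rfl

lemma gmu_eq (hr : ∀ b : ℤ, r (b + ℓ) = r b) (hℓ : ℓ ≠ 0) (μ : YoungDiagram) :
    gmu r a p μ = 2 * ((∑ c ∈ Finset.range ℓ, (ncolor ℓ a c μ : ℤ) * (r ((c : ℕ) : ℤ) : ℤ)) -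
      p * μ.ncols) := by
  rw [gmu]
  have h1 : ∀ j, g r a p (μ.colLen j) =
      -2 * p + 2 * ∑ b ∈ Finset.range (μ.colLen j), (r (a - (b : ℤ)) : ℤ) := fun j => rfl
  rw [Finset.sum_congr rfl fun j _ => h1 j, Finset.sum_add_distrib, Finset.sum_const,
    Finset.card_range, ← Finset.mul_sum, key_count hr hℓ μ]
  push_cast
  ring

lemma Emu_apply (hℓ : ℓ ≠ 0) (μ : YoungDiagram) (x : ZMod ℓ) :
    Emu ℓ a μ x = ncolor ℓ a x.val μ := by
  rw [Emu, ← count_lemma hℓ μ x, Finset.sum_apply']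
  refine Finset.sum_congr rfl fun j _ => ?_
  rw [E, Finset.sum_apply']
  refine Finset.sum_congr rfl fun b _ => ?_
  rw [Finsupp.single_apply]

lemma D_apply (hℓ : ℓ ≠ 0) (μ : YoungDiagram) (x : ZMod ℓ) :
    (∑ c ∈ Finset.range ℓ, Finsupp.single (((c : ℕ) : ℤ) : ZMod ℓ) (ncolor ℓ a c μ)) x =
      ncolor ℓ a x.val μ := by
  haveI : NeZero ℓ := ⟨hℓ⟩
  rw [Finset.sum_apply']
  rw [Finset.sum_eq_single x.val]
  · rw [Finsupp.single_apply, if_pos]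
    push_cast
    rw [ZMod.natCast_val, ZMod.cast_id]
  · intro c hc hne
    rw [Finsupp.single_apply, if_neg]
    intro h
    apply hne
    rw [← ZMod.val_natCast_of_lt (Finset.mem_range.1 hc)]
    congr 1
    push_cast at h
    exact h
  · intro hmem
    exact absurd (Finset.mem_range.2 (ZMod.val_lt _)) hmem

lemma bridge (hr : ∀ b : ℤ, r (b + ℓ) = r b) (hℓ : ℓ ≠ 0) (μ : YoungDiagram) :
    MvPowerSeries.C (σ := ZMod ℓ) (R := R)
        (T (2 * ((∑ c ∈ Finset.range ℓ, (ncolor ℓ a c μ : ℤ) * (r ((c : ℕ) : ℤ) : ℤ)) -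
          p * μ.ncols))) *
      ∏ c ∈ Finset.range ℓ, (MvPowerSeries.X ((((c : ℕ) : ℤ) : ZMod ℓ)) : S ℓ) ^ ncolor ℓ a c μ =
      Term ℓ r a p μ := by
  rw [Term_eq_monomial]
  have hX : ∀ c : ℕ, (MvPowerSeries.X ((((c : ℕ) : ℤ) : ZMod ℓ)) : S ℓ) ^ ncolor ℓ a c μ =
      monomial (R := R) (Finsupp.single ((((c : ℕ) : ℤ) : ZMod ℓ)) (ncolor ℓ a c μ)) (T 0) := by
    intro c
    rw [X_pow_eq, T_zero]
  rw [Finset.prod_congr rfl fun c _ => hX c, prod_monomial, ← monomial_zero_eq_C_apply,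
    monomial_mul_monomial, ← T_add]
  rw [zero_add, Finset.sum_const, smul_zero, add_zero]
  have hD : (∑ c ∈ Finset.range ℓ,
      Finsupp.single ((((c : ℕ) : ℤ) : ZMod ℓ)) (ncolor ℓ a c μ)) = Emu ℓ a μ := by
    ext x
    rw [D_apply hℓ μ x, Emu_apply hℓ μ x]
  rw [hD, gmu_eq hr hℓ μ]

end Bridge
end Stmt1Aux

namespace Stmt1Aux
open Finset MvPowerSeries LaurentPolynomial

section Assemble
variable {ℓ : ℕ} {r : ℤ → ℕ} {a p : ℤ}

lemma prod_Fct_range (N : ℕ) :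
    ∏ k ∈ Finset.range N, Fct ℓ r a p k =
      ∏ h ∈ Finset.Icc 1 (N * ℓ), Ring.inverse (1 - t ℓ r a p h) := by
  induction N with
  | zero =>
    rw [Finset.range_zero, Finset.prod_empty, zero_mul,
      show Finset.Icc 1 0 = ∅ from Finset.Icc_eq_empty (by omega), Finset.prod_empty]
  | succ N ih =>
    rw [Finset.prod_range_succ, ih]
    have h1 : Fct ℓ r a p N =
        ∏ h ∈ Finset.Ioc (N * ℓ) (N * ℓ + ℓ), Ring.inverse (1 - t ℓ r a p h) := by
      have hIcc : ∀ m : ℕ, Finset.Icc 1 m = Finset.Ioc 0 m := fun m => by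
        ext x
        simp only [Finset.mem_Icc, Finset.mem_Ioc]
        omega
      rw [Fct, hIcc ℓ]
      rw [show Finset.Ioc (N * ℓ) (N * ℓ + ℓ) = Finset.Ioc (N * ℓ + 0) (N * ℓ + ℓ) by
        rw [add_zero]]
      rw [← Finset.map_add_left_Ioc]
      rw [Finset.prod_map]
      rfl
    have hIcc : ∀ m : ℕ, Finset.Icc 1 m = Finset.Ioc 0 m := fun m => by
      ext x
      simp only [Finset.mem_Icc, Finset.mem_Ioc]
      omega
    rw [h1, hIcc (N * ℓ),
      Finset.prod_Ioc_consecutive _ (by omega) (by omega : N * ℓ ≤ N * ℓ + ℓ),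
      show N * ℓ + ℓ = (N + 1) * ℓ by ring, ← hIcc ((N + 1) * ℓ)]

lemma Fm_eq_self {M n : ℕ} (hM : n ≤ M) : Fm M n = Fm n n := by
  ext μ
  rw [mem_Fm, mem_Fm]
  have := colLen_le_card μ 0
  omega

lemma coeff_PP_eq_sum (hℓ : ℓ ≠ 0) (d : ZMod ℓ →₀ ℕ) :
    MvPowerSeries.coeff (R := R) d (PP ℓ r a p) =
      ∑ μ ∈ Fm (deg d) (deg d), MvPowerSeries.coeff (R := R) d (Term ℓ r a p μ) := by
  rw [coeff_PP, prod_Fct_range, ← Sig_eq_prod, coeff_Sig, Fm_eq_self]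
  calc deg d ≤ (deg d + 1) * 1 := by omega
    _ ≤ (deg d + 1) * ℓ := Nat.mul_le_mul_left _ (by omega)

lemma hasSum_Term (hℓ : ℓ ≠ 0) : HasSum (Term ℓ r a p) (PP ℓ r a p) := by
  rw [HasSum]
  rw [show (nhds (PP ℓ r a p)) = _ from rfl]
  refine tendsto_pi_nhds.2 ?_
  intro d
  refine Filter.Tendsto.congr' ?_ tendsto_const_nhds
  filter_upwards [Filter.eventually_ge_atTop (Fm (deg d) (deg d))] with F hF
  show PP ℓ r a p d = MvPowerSeries.coeff (R := R) d (∑ μ ∈ F, Term ℓ r a p μ)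
  rw [map_sum]
  have h2 : ∑ μ ∈ F, MvPowerSeries.coeff (R := R) d (Term ℓ r a p μ) =
      ∑ μ ∈ Fm (deg d) (deg d), MvPowerSeries.coeff (R := R) d (Term ℓ r a p μ) := by
    refine (Finset.sum_subset hF fun μ hμF hμnot => ?_).symm
    refine coeff_Term_ne fun hcard => ?_
    have := colLen_le_card μ 0
    exact hμnot (mem_Fm.2 ⟨by omega, by omega⟩)
  rw [h2, ← coeff_PP_eq_sum hℓ]
  rfl

end Assemble
end Stmt1Aux

namespace Stmt1Aux
open Finset MvPowerSeries LaurentPolynomial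

lemma Fct_eq {ℓ : ℕ} {r : ℤ → ℕ} {a p : ℤ} (hℓ : ℓ ≠ 0) (k : ℕ) :
    Fct ℓ r a p k = Ring.inverse (1 - t ℓ r a p ((k + 1) * ℓ)) *
      ∏ c ∈ Finset.Icc 1 (ℓ - 1), Ring.inverse (1 - t ℓ r a p (k * ℓ + c)) := by
  obtain ⟨m, rfl⟩ : ∃ m, ℓ = m + 1 := ⟨ℓ - 1, by omega⟩
  rw [Fct, Finset.prod_Icc_succ_top (by omega)]
  simp only [Nat.add_sub_cancel]
  rw [mul_comm]
  have h1 : k * (m + 1) + (m + 1) = (k + 1) * (m + 1) := by ring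
  rw [h1]

end Stmt1Aux


open Finset MvPowerSeries LaurentPolynomial Stmt1Aux in
/-- Fix `ℓ ≥ 2`, an `ℓ`-periodic `r : ℤ → ℕ`, an index `a ∈ {0,…,ℓ−1}`, and an
integer `p`.  For a Young diagram `μ` with the `a`-coloring, let `n_c(μ)` be the number of
boxes of color `c` and `w(μ) := ∑_{c=0}^{ℓ−1} n_c(μ) r_c − p·col(μ)`.  In
`(ℤ[y,y⁻¹])[[q_0, …, q_{ℓ−1}]]` (realized as `MvPowerSeries (ZMod ℓ) (LaurentPolynomial ℤ)`,
with the product topology, the coefficients discrete), writing `q̃_c := y^{2 r_c} q_c` and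
`z := q̃_0 ⋯ q̃_{ℓ−1}`, the family over all Young diagrams `μ` of
`y^{2 w(μ)} ∏_{c=0}^{ℓ−1} q_c^{n_c(μ)}` has a sum, and this sum equals
`∏'_{k} (1 − y^{−2p} z^{k+1})⁻¹ ∏_{c=1}^{ℓ−1} (1 − y^{−2p} z^{k} q̃_a q̃_{a−1} ⋯ q̃_{a−c+1})⁻¹`
(the factor indexed by `k : ℕ` is the paper's factor for `k+1`), each factor being a unit. -/
theorem stmt1 (ℓ : ℕ) (hℓ : 2 ≤ ℓ) (r : ℤ → ℕ) (hr : ∀ b : ℤ, r (b + ℓ) = r b)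
    (a : ℤ) (ha : 0 ≤ a ∧ a < ℓ) (p : ℤ) :
    let R := LaurentPolynomial ℤ
    let S := MvPowerSeries (ZMod ℓ) R
    let q : ℤ → S := fun c => MvPowerSeries.X ((c : ZMod ℓ))
    let qt : ℤ → S := fun c =>
      MvPowerSeries.C (σ := ZMod ℓ) (R := R) (LaurentPolynomial.T (2 * (r c : ℤ))) * q c
    let z : S := ∏ b ∈ Finset.range ℓ, qt (b : ℤ)
    let w : YoungDiagram → ℤ := fun μ =>
      (∑ c ∈ Finset.range ℓ, (ncolor ℓ a c μ : ℤ) * (r (c : ℤ) : ℤ)) - p * μ.ncols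
    let factor : ℕ → S := fun k =>
      Ring.inverse (1 - MvPowerSeries.C (σ := ZMod ℓ) (R := R) (LaurentPolynomial.T (-2 * p)) *
          z ^ (k + 1)) *
        ∏ c ∈ Finset.Icc 1 (ℓ - 1),
          Ring.inverse (1 - MvPowerSeries.C (σ := ZMod ℓ) (R := R) (LaurentPolynomial.T (-2 * p)) *
            z ^ k * ∏ b ∈ Finset.range c, qt (a - (b : ℤ)))
    (∀ k : ℕ, IsUnit (1 - MvPowerSeries.C (σ := ZMod ℓ) (R := R) (LaurentPolynomial.T (-2 * p)) *
        z ^ (k + 1))) ∧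
    (∀ k : ℕ, ∀ c ∈ Finset.Icc 1 (ℓ - 1),
      IsUnit (1 - MvPowerSeries.C (σ := ZMod ℓ) (R := R) (LaurentPolynomial.T (-2 * p)) *
        z ^ k * ∏ b ∈ Finset.range c, qt (a - (b : ℤ)))) ∧
    Multipliable factor ∧
    HasSum
      (fun μ : YoungDiagram =>
        MvPowerSeries.C (σ := ZMod ℓ) (R := R) (LaurentPolynomial.T (2 * w μ)) *
          ∏ c ∈ Finset.range ℓ, q (c : ℤ) ^ ncolor ℓ a c μ)
      (∏' k : ℕ, factor k) := by
  intro R S q qt z w factor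
  have hℓ0 : ℓ ≠ 0 := by omega
  have h1 : ∀ k : ℕ, MvPowerSeries.C (σ := ZMod ℓ) (R := Stmt1Aux.R) (T (-2 * p)) * zz ℓ r ^ k =
      t ℓ r a p (k * ℓ) := fun k => C_z_pow_eq_t hr hℓ0 k
  have h2 : ∀ k c : ℕ, MvPowerSeries.C (σ := ZMod ℓ) (R := Stmt1Aux.R) (T (-2 * p)) * zz ℓ r ^ k *
      ∏ b ∈ Finset.range c, Stmt1Aux.qt ℓ r (a - (b : ℤ)) = t ℓ r a p (k * ℓ + c) :=
    fun k c => C_z_pow_mul_eq_t hr hℓ0 k c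
  have hfactor : factor = Fct ℓ r a p := by
    funext k
    show Ring.inverse (1 - MvPowerSeries.C (σ := ZMod ℓ) (R := Stmt1Aux.R) (T (-2 * p)) *
        zz ℓ r ^ (k + 1)) *
      ∏ c ∈ Finset.Icc 1 (ℓ - 1),
        Ring.inverse (1 - MvPowerSeries.C (σ := ZMod ℓ) (R := Stmt1Aux.R) (T (-2 * p)) *
          zz ℓ r ^ k * ∏ b ∈ Finset.range c, Stmt1Aux.qt ℓ r (a - (b : ℤ))) = Fct ℓ r a p k
    rw [h1 (k + 1), Finset.prod_congr rfl (fun c (_ : c ∈ Finset.Icc 1 (ℓ - 1)) => by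
      rw [h2 k c]), Fct_eq hℓ0 k]
  refine ⟨?_, ?_, ?_, ?_⟩
  · intro k
    show IsUnit (1 - MvPowerSeries.C (σ := ZMod ℓ) (R := Stmt1Aux.R) (T (-2 * p)) * zz ℓ r ^ (k + 1))
    rw [h1 (k + 1)]
    refine isUnit_one_sub_t _ ?_
    have : ℓ ≤ (k + 1) * ℓ := Nat.le_mul_of_pos_left ℓ (by omega)
    omega
  · intro k c hc
    rw [Finset.mem_Icc] at hc
    show IsUnit (1 - MvPowerSeries.C (σ := ZMod ℓ) (R := Stmt1Aux.R) (T (-2 * p)) * zz ℓ r ^ k *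
      ∏ b ∈ Finset.range c, Stmt1Aux.qt ℓ r (a - (b : ℤ)))
    rw [h2 k c]
    exact isUnit_one_sub_t _ (by omega)
  · rw [hfactor]
    exact multipliable_Fct hℓ0
  · rw [hfactor, tprod_Fct hℓ0]
    have hfun : (fun μ : YoungDiagram =>
        MvPowerSeries.C (σ := ZMod ℓ) (R := R) (LaurentPolynomial.T (2 * w μ)) *
          ∏ c ∈ Finset.range ℓ, q (c : ℤ) ^ ncolor ℓ a c μ) = Term ℓ r a p := by
      funext μ
      exact bridge hr hℓ0 μ
    rw [hfun]
    exact hasSum_Term hℓ0
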